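/- Let G be a randomly k-dimensional graph of order at least 2. Then ω(G) = k + 1 if and only if G is a complete graph. -/

import Mathlib

open SimpleGraph

/-- `W` is a resolving set for `G`: distinct vertices have distinct
metric representations with respect to `W`. -/
def IsResolvingSet {V : Type*} (G : SimpleGraph V) (W : Finset V) : Prop :=
  ∀ u v : V, u ≠ v → ∃ w ∈ W, G.dist u w ≠ G.dist v w

/-- The metric dimension `β(G)`: minimum cardinality of a resolving set. -/
noncomputable def metricDim {V : Type*} [Fintype V] (G : SimpleGraph V) : ℕ :=
  sInf {k | ∃ W : Finset V, W.card = k ∧ IsResolvingSet G W}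

/-- A (metric) basis of `G`: a resolving set of minimum cardinality. -/
def IsMetricBasis {V : Type*} [Fintype V] (G : SimpleGraph V) (B : Finset V) : Prop :=
  IsResolvingSet G B ∧ B.card = metricDim G

/-- The resolving number `res(G)`: the minimum `k` such that every `k`-set of
vertices is a resolving set. -/
noncomputable def resolvingNumber {V : Type*} [Fintype V] (G : SimpleGraph V) : ℕ :=
  sInf {k | ∀ W : Finset V, W.card = k → IsResolvingSet G W}

/-- The basis number `bas(G)`: the maximum `r` such that every `r`-set of
vertices is contained in some basis. -/
noncomputable def basisNumber {V : Type*} [Fintype V] (G : SimpleGraph V) : ℕ :=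
  sSup {r | r ≤ Fintype.card V ∧
    ∀ S : Finset V, S.card = r → ∃ B : Finset V, S ⊆ B ∧ IsMetricBasis G B}

/-- `G` is randomly `k`-dimensional: `β(G) = k` and every `k`-set of vertices
is a basis of `G`. -/
def RandomlyDimensional {V : Type*} [Fintype V] (G : SimpleGraph V) (k : ℕ) : Prop :=
  metricDim G = k ∧ ∀ W : Finset V, W.card = k → IsMetricBasis G W

/- ## Auxiliary lemmas -/

/-- In a connected graph there is a neighbor of `z` strictly closer to `w`. -/
lemma my_exists_adj_closer {V : Type*} (G : SimpleGraph V) (hG : G.Connected) (z w : V)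
    (hm : G.dist z w ≠ 0) : ∃ a, G.Adj z a ∧ G.dist a w = G.dist z w - 1 := by
  obtain ⟨p, hp⟩ := (hG z w).exists_walk_length_eq_dist
  cases p with
  | nil => simp at hp; exact absurd SimpleGraph.dist_self hm
  | @cons _ a _ hadj q =>
    refine ⟨a, hadj, ?_⟩
    have h1 : G.dist a w ≤ G.dist z w - 1 := by
      have := G.dist_le q
      simp [Walk.length_cons] at hp
      omega
    have h2 : G.dist z w ≤ G.dist z a + G.dist a w := hG.dist_triangle
    have h3 : G.dist z a = 1 := dist_eq_one_iff_adj.mpr hadj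
    omega

/-- The universe is a resolving set for a connected graph. -/
lemma my_univ_resolving {V : Type*} [Fintype V] (G : SimpleGraph V) (hG : G.Connected) :
    IsResolvingSet G Finset.univ := by
  intro u v huv
  refine ⟨u, Finset.mem_univ u, ?_⟩
  have h0 : G.dist u u = 0 := SimpleGraph.dist_self
  have h1 : 0 < G.dist v u := hG.pos_dist_of_ne huv.symm
  omega

/-- A resolving set of size `metricDim G` exists. -/
lemma my_exists_resolving {V : Type*} [Fintype V] (G : SimpleGraph V) (hG : G.Connected) :
    ∃ W : Finset V, W.card = metricDim G ∧ IsResolvingSet G W := by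
  have hne : (Finset.univ : Finset V).card ∈
      {k | ∃ W : Finset V, W.card = k ∧ IsResolvingSet G W} :=
    ⟨Finset.univ, rfl, my_univ_resolving G hG⟩
  exact Nat.sInf_mem ⟨_, hne⟩

theorem randomlyDimensional_cliqueNum_eq_iff {V : Type*} [Fintype V] (G : SimpleGraph V)
    (hG : G.Connected) (hcard : 2 ≤ Fintype.card V) (k : ℕ)
    (h : RandomlyDimensional G k) : G.cliqueNum = k + 1 ↔ G = ⊤ := by
  classical
  obtain ⟨W0, hW0card, hW0⟩ := my_exists_resolving G hG
  rw [h.1] at hW0card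
  -- k ≥ 1
  have hk1 : 1 ≤ k := by
    by_contra hk
    have hk0 : k = 0 := by omega
    rw [hk0, Finset.card_eq_zero] at hW0card
    subst hW0card
    obtain ⟨u, v, huv⟩ := Fintype.exists_pair_of_one_lt_card hcard
    obtain ⟨w, hw, -⟩ := hW0 u v huv
    exact absurd hw (Finset.notMem_empty w)
  -- every pair of distinct vertices is resolved by all but at most k-1 vertices
  have pair_bound : ∀ u v : V, u ≠ v →
      (Finset.univ.filter fun w => G.dist u w = G.dist v w).card < k := by
    intro u v huv
    by_contra hle
    push_neg at hle
    obtain ⟨W, hWsub, hWcard⟩ := Finset.exists_subset_card_eq hle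
    obtain ⟨w, hw, hne⟩ := (h.2 W hWcard).1 u v huv
    have := hWsub hw
    simp only [Finset.mem_filter] at this
    exact hne this.2
  constructor
  · -- forward direction
    intro hq
    obtain ⟨s, hs⟩ := G.exists_isNClique_cliqueNum
    rw [hq] at hs
    -- adjacency inside the clique
    have hadj : ∀ u ∈ s, ∀ v ∈ s, u ≠ v → G.Adj u v := by
      intro u hu v hv huv
      exact hs.1 (Finset.mem_coe.mpr hu) (Finset.mem_coe.mpr hv) huv
    -- any vertex outside s resolves every pair in s
    have hres : ∀ z, z ∉ s → ∀ u ∈ s, ∀ v ∈ s, u ≠ v → G.dist z u ≠ G.dist z v := by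
      intro z hz u hu v hv huv heq
      set F := Finset.univ.filter fun w => G.dist u w = G.dist v w with hF
      have hsubF : insert z ((s.erase u).erase v) ⊆ F := by
        intro w hw
        rcases Finset.mem_insert.mp hw with rfl | hw
        · simp only [hF, Finset.mem_filter, Finset.mem_univ, true_and]
          rw [SimpleGraph.dist_comm (u := u) (v := w), SimpleGraph.dist_comm (u := v) (v := w)]
          exact heq
        · have hwv : w ≠ v := (Finset.mem_erase.mp hw).1
          have hwu : w ≠ u := (Finset.mem_erase.mp (Finset.mem_erase.mp hw).2).1
          have hws : w ∈ s := (Finset.mem_erase.mp (Finset.mem_erase.mp hw).2).2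
          simp only [hF, Finset.mem_filter, Finset.mem_univ, true_and]
          have h1 : G.dist u w = 1 := dist_eq_one_iff_adj.mpr (hadj u hu w hws (Ne.symm hwu))
          have h2 : G.dist v w = 1 := dist_eq_one_iff_adj.mpr (hadj v hv w hws (Ne.symm hwv))
          rw [h1, h2]
      have hcardI : (insert z ((s.erase u).erase v)).card = k := by
        have hzmem : z ∉ (s.erase u).erase v := fun hzm =>
          hz (Finset.mem_erase.mp (Finset.mem_erase.mp hzm).2).2
        rw [Finset.card_insert_of_notMem hzmem,
          Finset.card_erase_of_mem (Finset.mem_erase.mpr ⟨huv.symm, hv⟩),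
          Finset.card_erase_of_mem hu, hs.2]
        omega
      have h1 := Finset.card_le_card hsubF
      have h2 := pair_bound u v huv
      rw [← hF] at h2
      omega
    by_cases hk : k = 1
    · -- special case k = 1
      subst hk
      -- every single vertex resolves everything
      have key : ∀ x u v : V, u ≠ v → G.dist u x ≠ G.dist v x := by
        intro x u v huv
        obtain ⟨w, hw, hne⟩ := (h.2 {x} (Finset.card_singleton x)).1 u v huv
        rwa [Finset.mem_singleton.mp hw] at hne
      -- extract an edge from the clique of size 2
      obtain ⟨u, w, huw, hsuw⟩ := Finset.card_eq_two.mp hs.2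
      have hadjuw : G.Adj u w := hadj u (by simp [hsuw]) w (by simp [hsuw]) huw
      -- show card V = 2
      have hV2 : Fintype.card V ≤ 2 := by
        by_contra hV
        push_neg at hV
        have hne_univ : ({u, w} : Finset V) ≠ Finset.univ := by
          intro he
          have : ({u, w} : Finset V).card = Fintype.card V := by
            rw [he, Finset.card_univ]
          rw [Finset.card_insert_of_notMem (by simpa using huw),
            Finset.card_singleton] at this
          omega
        have hS : (Finset.univ.filter fun z => z ≠ u ∧ z ≠ w).Nonempty := by
          rw [Finset.filter_nonempty_iff]
          by_contra hc
          push_neg at hc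
          apply hne_univ
          apply Finset.eq_univ_of_forall
          intro x
          rcases Classical.em (x = u) with rfl | hxu
          · simp
          · rcases hc x (Finset.mem_univ x) hxu with rfl
            simp
        obtain ⟨z, hz, hzmin⟩ := Finset.exists_min_image _ (fun z => G.dist z w) hS
        simp only [Finset.mem_filter, Finset.mem_univ, true_and] at hz
        have hduw : G.dist u w = 1 := dist_eq_one_iff_adj.mpr hadjuw
        have hdzw0 : G.dist z w ≠ 0 := (hG.pos_dist_of_ne hz.2).ne'
        have hdzw1 : G.dist z w ≠ 1 := by
          have := key w z u hz.1
          omega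
        obtain ⟨a, haz, haw⟩ := my_exists_adj_closer G hG z w hdzw0
        have haw0 : G.dist a w ≠ 0 := by omega
        have haw' : a ≠ w := by
          intro rfl'
          rw [rfl', SimpleGraph.dist_self] at haw0
          exact haw0 rfl
        have hau : a = u := by
          by_contra hau
          have ham : a ∈ Finset.univ.filter fun z => z ≠ u ∧ z ≠ w := by
            simp [hau, haw']
          have := hzmin a ham
          omega
        subst hau
        -- dist z w = 2 and dist z u = 1 = dist w u, contradicting key
        have h1 : G.dist z a = 1 := dist_eq_one_iff_adj.mpr haz
        have h2 : G.dist w a = 1 := dist_eq_one_iff_adj.mpr hadjuw.symm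
        exact key a z w hz.2 (by omega)
      -- then G = ⊤
      have huniv : ({u, w} : Finset V) = Finset.univ := by
        apply Finset.eq_univ_of_card
        rw [Finset.card_insert_of_notMem (by simpa using huw), Finset.card_singleton]
        omega
      ext x y
      simp only [top_adj]
      constructor
      · exact fun hxy => hxy.ne
      · intro hxy
        have hx : x ∈ ({u, w} : Finset V) := huniv ▸ Finset.mem_univ x
        have hy : y ∈ ({u, w} : Finset V) := huniv ▸ Finset.mem_univ y
        simp only [Finset.mem_insert, Finset.mem_singleton] at hx hy
        rcases hx with rfl | rfl <;> rcases hy with rfl | rfl <;>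
          first | exact absurd rfl hxy | exact hadjuw | exact hadjuw.symm
    · -- case k ≥ 2 : the clique must be the whole vertex set
      have hk2 : 2 ≤ k := by omega
      have hsuniv : s = Finset.univ := by
        by_contra hsu
        obtain ⟨z, -, hz⟩ := Finset.exists_of_ssubset
          (Finset.ssubset_univ_iff.mpr hsu)
        -- distances from z to the clique are pairwise distinct
        have hinj : Set.InjOn (fun u => G.dist z u) ↑s := by
          intro u hu v hv heq
          by_contra huv
          exact hres z hz u hu v hv huv heq
        set T := s.image fun u => G.dist z u with hT
        have hTcard : T.card = k + 1 := by
          rw [hT, Finset.card_image_of_injOn hinj, hs.2]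
        have hTne : T.Nonempty := by
          rw [← Finset.card_pos, hTcard]; omega
        set m := T.min' hTne with hm
        obtain ⟨u0, hu0, hu0m⟩ := Finset.mem_image.mp (T.min'_mem hTne)
        have hTsub : T ⊆ Finset.Icc m (m + 1) := by
          intro t ht
          obtain ⟨v, hv, rfl⟩ := Finset.mem_image.mp ht
          rw [Finset.mem_Icc]
          refine ⟨T.min'_le _ ht, ?_⟩
          rcases Classical.em (v = u0) with rfl | hvu0
          · omega
          · have htri : G.dist z v ≤ G.dist z u0 + G.dist u0 v := hG.dist_triangle
            have h1 : G.dist u0 v = 1 :=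
              dist_eq_one_iff_adj.mpr (hadj u0 hu0 v hv (Ne.symm hvu0))
            omega
        have := Finset.card_le_card hTsub
        rw [hTcard, Nat.card_Icc] at this
        omega
      -- s = univ, so G is complete
      ext x y
      simp only [top_adj]
      exact ⟨fun hxy => hxy.ne, fun hxy =>
        hadj x (hsuniv ▸ Finset.mem_univ x) y (hsuniv ▸ Finset.mem_univ y) hxy⟩
  · -- backward direction
    intro hg
    subst hg
    -- cliqueNum ⊤ = card V
    have hclique : (⊤ : SimpleGraph V).cliqueNum = Fintype.card V := by
      apply le_antisymm
      · obtain ⟨s, hs⟩ := (⊤ : SimpleGraph V).exists_isNClique_cliqueNum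
        rw [← hs.2]
        exact Finset.card_le_univ s
      · rw [← Finset.card_univ]
        exact SimpleGraph.IsClique.card_le_cliqueNum
          (tc := fun x _ y _ hxy => by simpa using hxy)
    rw [hclique]
    -- k ≥ card V - 1
    have hge : Fintype.card V - 1 ≤ k := by
      by_contra hlt
      push_neg at hlt
      have : 2 ≤ (Finset.univ \ W0).card := by
        rw [Finset.card_sdiff_of_subset (Finset.subset_univ W0), Finset.card_univ, hW0card]
        omega
      obtain ⟨u, hu, v, hv, huv⟩ := Finset.one_lt_card.mp this
      obtain ⟨w, hw, hne⟩ := hW0 u v huv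
      have hwu : w ≠ u := fun he => (Finset.mem_sdiff.mp hu).2 (he ▸ hw)
      have hwv : w ≠ v := fun he => (Finset.mem_sdiff.mp hv).2 (he ▸ hw)
      rw [SimpleGraph.dist_top_of_ne (Ne.symm hwu),
        SimpleGraph.dist_top_of_ne (Ne.symm hwv)] at hne
      exact hne rfl
    -- k ≤ card V - 1
    have hle : k ≤ Fintype.card V - 1 := by
      have h1 : 1 ≤ Fintype.card V := by omega
      obtain ⟨x⟩ := Fintype.card_pos_iff.mp (by omega : 0 < Fintype.card V)
      have hres : IsResolvingSet (⊤ : SimpleGraph V) (Finset.univ.erase x) := by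
        intro u v huv
        rcases Classical.em (u = x) with rfl | hux
        · refine ⟨v, Finset.mem_erase.mpr ⟨Ne.symm huv, Finset.mem_univ v⟩, ?_⟩
          rw [SimpleGraph.dist_top_of_ne huv, SimpleGraph.dist_self]
          omega
        · refine ⟨u, Finset.mem_erase.mpr ⟨hux, Finset.mem_univ u⟩, ?_⟩
          rw [SimpleGraph.dist_top_of_ne (Ne.symm huv), SimpleGraph.dist_self]
          omega
      have : metricDim (⊤ : SimpleGraph V) ≤ (Finset.univ.erase x).card :=
        Nat.sInf_le ⟨Finset.univ.erase x, rfl, hres⟩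
      rw [Finset.card_erase_of_mem (Finset.mem_univ x), Finset.card_univ, h.1] at this
      omega
    omega
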